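/- Consider a tandem of J FIFO servers with n jobs where the deterministic interarrival and service times satisfy, for all 1 ≤ k ≤ n: Γ_min(k) ≤ Σ_{i=k}^{n} U_i ≤ Γ_max(k) and Γ^j_min(k) ≤ Σ_{i=k}^{n} V_i^j ≤ Γ^j_max(k) for each server j. Then the sojourn time of job n satisfies W_n ≤ max over chains 1 ≤ k_1 ≤ ... ≤ k_J ≤ n of [ Σ_{j=1}^{J-1} (Γ^j_max(k_j) − Γ^j_min(k_{j+1}+1)) + Γ^J_max(k_J) − Γ_min(k_1+1) ]. -/

import Mathlib

open Finset

/-- robust bound on the sojourn time in a tandem of J FIFO servers.  `W` is the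
sojourn time of job `n`, characterized as the greatest value of the max-plus representation.
Under the tail-sum bounds `Γmin/Γmax` (arrivals) and `Γjmin/Γjmax` (services), with the
convention that the lower bounds vanish at index `n+1`,
W ≤ max over chains 1 ≤ k₁ ≤ ⋯ ≤ k_J ≤ n of
  ∑_{j=1}^{J-1} (Γjmax j (k_j) - Γjmin j (k_{j+1}+1)) + Γjmax J (k_J) - Γmin (k₁+1). -/

lemma sum_split9 (f : ℕ → ℝ) {a b n : ℕ} (hab : a ≤ b) (hbn : b ≤ n) :
    ∑ i ∈ Finset.Icc a b, f i
      = ∑ i ∈ Finset.Icc a n, f i - ∑ i ∈ Finset.Icc (b + 1) n, f i := by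
  have hu : Finset.Icc a b ∪ Finset.Ioc b n = Finset.Icc a n := by
    ext x
    simp only [Finset.mem_union, Finset.mem_Icc, Finset.mem_Ioc]
    omega
  have hd : Disjoint (Finset.Icc a b) (Finset.Ioc b n) := by
    rw [Finset.disjoint_left]
    intro x hx hx'
    simp only [Finset.mem_Icc, Finset.mem_Ioc] at hx hx'
    omega
  rw [Finset.Icc_add_one_left_eq_Ioc, ← hu, Finset.sum_union hd]
  ring

theorem stmt9 (J n : ℕ) (hJ : 1 ≤ J) (hn : 1 ≤ n)
    (U : ℕ → ℝ) (V : ℕ → ℕ → ℝ) (hU : ∀ i, 0 ≤ U i) (hV : ∀ i j, 0 ≤ V i j)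
    (Γmin Γmax : ℕ → ℝ) (Γjmin Γjmax : ℕ → ℕ → ℝ)
    (hGam : ∀ k, 1 ≤ k → k ≤ n →
      Γmin k ≤ ∑ i ∈ Finset.Icc k n, U i ∧ (∑ i ∈ Finset.Icc k n, U i) ≤ Γmax k)
    (hGamj : ∀ j k, 1 ≤ j → j ≤ J → 1 ≤ k → k ≤ n →
      Γjmin j k ≤ ∑ i ∈ Finset.Icc k n, V i j ∧ (∑ i ∈ Finset.Icc k n, V i j) ≤ Γjmax j k)
    (hconv : ∀ j, Γjmin j (n + 1) = 0) (hconv' : Γmin (n + 1) = 0)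
    (W : ℝ)
    (hW : IsGreatest
      { y : ℝ | ∃ k : ℕ → ℕ, 1 ≤ k 1 ∧ (∀ j, 1 ≤ j → j ≤ J - 1 → k j ≤ k (j + 1)) ∧ k J ≤ n ∧
        y = (∑ j ∈ Finset.Icc 1 (J - 1), ∑ i ∈ Finset.Icc (k j) (k (j + 1)), V i j)
            + (∑ i ∈ Finset.Icc (k J) n, V i J)
            - ∑ i ∈ Finset.Icc (k 1 + 1) n, U i } W) :
    ∃ k : ℕ → ℕ, 1 ≤ k 1 ∧ (∀ j, 1 ≤ j → j ≤ J - 1 → k j ≤ k (j + 1)) ∧ k J ≤ n ∧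
      W ≤ (∑ j ∈ Finset.Icc 1 (J - 1), (Γjmax j (k j) - Γjmin j (k (j + 1) + 1)))
            + Γjmax J (k J) - Γmin (k 1 + 1) := by
  obtain ⟨⟨k, hk1, hmono, hkJ, hy⟩, hub⟩ := hW
  have hmono' : ∀ j m, 1 ≤ j → j ≤ m → m ≤ J → k j ≤ k m := by
    intro j m hj hjm hmJ
    induction m, hjm using Nat.le_induction with
    | base => exact le_rfl
    | succ m hm ih =>
        exact le_trans (ih (by omega)) (hmono m (by omega) (by omega))
  have hkjn : ∀ j, 1 ≤ j → j ≤ J → k j ≤ n :=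
    fun j hj hjJ => le_trans (hmono' j J hj hjJ le_rfl) hkJ
  have hk1j : ∀ j, 1 ≤ j → j ≤ J → 1 ≤ k j :=
    fun j hj hjJ => le_trans hk1 (hmono' 1 j le_rfl hj hjJ)
  refine ⟨k, hk1, hmono, hkJ, ?_⟩
  rw [hy]
  have hlow : ∀ g : ℕ → ℝ, ∀ L : ℕ → ℝ, ∀ b : ℕ, b ≤ n → L (n + 1) = 0 →
      (b + 1 ≤ n → L (b + 1) ≤ ∑ i ∈ Finset.Icc (b + 1) n, g i) →
      L (b + 1) ≤ ∑ i ∈ Finset.Icc (b + 1) n, g i := by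
    intro g L b hbn h0 hcase
    by_cases h : b + 1 ≤ n
    · exact hcase h
    · have hb : b = n := by omega
      rw [hb, h0, Finset.Icc_eq_empty (by omega), Finset.sum_empty]
  apply sub_le_sub
  · apply add_le_add
    · apply Finset.sum_le_sum
      intro j hj
      rw [Finset.mem_Icc] at hj
      have hjJ : j + 1 ≤ J := by omega
      rw [sum_split9 (fun i => V i j) (hmono j hj.1 hj.2)
        (hkjn (j + 1) (by omega) hjJ)]
      apply sub_le_sub
      · exact (hGamj j (k j) hj.1 (by omega) (hk1j j hj.1 (by omega))
          (hkjn j hj.1 (by omega))).2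
      · exact hlow (fun i => V i j) (Γjmin j) (k (j + 1))
          (hkjn (j + 1) (by omega) hjJ) (hconv j)
          (fun h => (hGamj j (k (j + 1) + 1) hj.1 (by omega) (by omega) h).1)
    · exact (hGamj J (k J) hJ le_rfl (hk1j J hJ le_rfl) hkJ).2
  · exact hlow U Γmin (k 1) (hkjn 1 le_rfl hJ) hconv'
      (fun h => (hGam (k 1 + 1) (by omega) h).1)
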